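/- For every row index i of the Fibonacci array f_{m,n} (m,n ≥ 0), the i-th row of f_{m,n}, read as a word of length F(n), is the image of the 1D Fibonacci word f_n under a letter-to-letter substitution determined by the row: under the substitution a ↦ c, b ↦ d if f_m[i] = b, and under the substitution a ↦ a, b ↦ b if f_m[i] = a (letters coded a=(0,0), b=(0,1), c=(1,0), d=(1,1) in the array and a=0, b=1 in 1D words). Moreover, any two rows i, i' of f_{m,n} with f_m[i] = f_m[i'] are identical. -/
import Mathlib


/-- Fibonacci numbers: F(0)=1, F(1)=1, F(n+2)=F(n+1)+F(n). -/
def F : ℕ → ℕ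
  | 0 => 1
  | 1 => 1
  | n + 2 => F (n + 1) + F n

/-- Finite Fibonacci words over {a,b} coded as Fin 2 (a=0, b=1). -/
def fibWord : ℕ → List (Fin 2)
  | 0 => [0]
  | 1 => [1]
  | n + 2 => fibWord (n + 1) ++ fibWord n

/-- The Fibonacci arrays f_{m,n} over {a,b,c,d} coded as Fin 2 × Fin 2,
with a=(0,0), b=(0,1), c=(1,0), d=(1,1); `fibArr m n i j` is the (i,j) entry
(0-indexed, only indices i < F m, j < F n are meaningful). -/
def fibArr : ℕ → ℕ → ℕ → ℕ → Fin 2 × Fin 2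
  | 0, 0, _, _ => (0, 0)
  | 0, 1, _, _ => (0, 1)
  | 1, 0, _, _ => (1, 0)
  | 1, 1, _, _ => (1, 1)
  | 0, n + 2, i, j =>
      if j < F (n + 1) then fibArr 0 (n + 1) i j else fibArr 0 n i (j - F (n + 1))
  | 1, n + 2, i, j =>
      if j < F (n + 1) then fibArr 1 (n + 1) i j else fibArr 1 n i (j - F (n + 1))
  | m + 2, k, i, j =>
      if i < F (m + 1) then fibArr (m + 1) k i j else fibArr m k (i - F (m + 1)) j
  termination_by m n => (m, n)

/-- The r × l subarray of u with top-left entry at (i,j). -/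
def subarr (u : ℕ → ℕ → Fin 2 × Fin 2) (i j r l : ℕ) : Fin r × Fin l → Fin 2 × Fin 2 :=
  fun p => u (i + p.1.val) (j + p.2.val)

/-- Number of square occurrences in a finite word. -/
noncomputable def sqOcc (w : List (Fin 2)) : ℕ :=
  {p : ℕ × ℕ | 1 ≤ p.2 ∧ p.1 + 2 * p.2 ≤ w.length ∧
    ∀ t < p.2, w.getD (p.1 + t) 0 = w.getD (p.1 + p.2 + t) 0}.ncard

/-- R(n): number of square occurrences in f_n. -/
noncomputable def R (n : ℕ) : ℕ := sqOcc (fibWord n)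

/-- The substitution a ↦ a, b ↦ b (into the 4-letter alphabet): 0 ↦ (0,0)=a, 1 ↦ (0,1)=b. -/
def substA : Fin 2 → Fin 2 × Fin 2
  | 0 => (0, 0)
  | 1 => (0, 1)

/-- The substitution a ↦ c, b ↦ d: 0 ↦ (1,0)=c, 1 ↦ (1,1)=d. -/
def substB : Fin 2 → Fin 2 × Fin 2
  | 0 => (1, 0)
  | 1 => (1, 1)

theorem fibWord_length : ∀ n, (fibWord n).length = F n := by
  intro n
  induction n using Nat.strong_induction_on with
  | _ n ih =>
    match n with
    | 0 => rfl
    | 1 => rfl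
    | n + 2 =>
      simp [fibWord, F, ih (n+1) (by omega), ih n (by omega)]

theorem fibArr_eq : ∀ s m n i j, m + n ≤ s → i < F m → j < F n →
    fibArr m n i j = ((fibWord m).getD i 0, (fibWord n).getD j 0) := by
  intro s
  induction s with
  | zero =>
    intro m n i j hs hi hj
    obtain rfl : m = 0 := by omega
    obtain rfl : n = 0 := by omega
    simp [F] at hi hj
    subst hi; subst hj
    simp [fibArr, fibWord]
  | succ s ih =>
    intro m n i j hs hi hj
    match m, n with
    | 0, 0 =>
      simp [F] at hi hj; subst hi; subst hj; simp [fibArr, fibWord]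
    | 0, 1 =>
      simp [F] at hi hj; subst hi; subst hj; simp [fibArr, fibWord]
    | 1, 0 =>
      simp [F] at hi hj; subst hi; subst hj; simp [fibArr, fibWord]
    | 1, 1 =>
      simp [F] at hi hj; subst hi; subst hj; simp [fibArr, fibWord]
    | 0, n + 2 =>
      rw [fibArr]
      split
      · rw [ih 0 (n+1) i j (by omega) hi (by assumption)]
        rw [show fibWord (n+2) = fibWord (n+1) ++ fibWord n from rfl,
          List.getD_append _ _ _ _ (by rw [fibWord_length]; assumption)]
      · have hj' : j - F (n+1) < F n := by
          have : F (n+2) = F (n+1) + F n := rfl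
          omega
        rw [ih 0 n i (j - F (n+1)) (by omega) hi hj']
        rw [show fibWord (n+2) = fibWord (n+1) ++ fibWord n from rfl,
          List.getD_append_right _ _ _ _ (by rw [fibWord_length]; omega)]
        rw [fibWord_length]
    | 1, n + 2 =>
      rw [fibArr]
      split
      · rw [ih 1 (n+1) i j (by omega) hi (by assumption)]
        rw [show fibWord (n+2) = fibWord (n+1) ++ fibWord n from rfl,
          List.getD_append _ _ _ _ (by rw [fibWord_length]; assumption)]
      · have hj' : j - F (n+1) < F n := by
          have : F (n+2) = F (n+1) + F n := rfl
          omega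
        rw [ih 1 n i (j - F (n+1)) (by omega) hi hj']
        rw [show fibWord (n+2) = fibWord (n+1) ++ fibWord n from rfl,
          List.getD_append_right _ _ _ _ (by rw [fibWord_length]; omega)]
        rw [fibWord_length]
    | m + 2, k =>
      rw [fibArr]
      split
      · rw [ih (m+1) k i j (by omega) (by assumption) hj]
        rw [show fibWord (m+2) = fibWord (m+1) ++ fibWord m from rfl,
          List.getD_append _ _ _ _ (by rw [fibWord_length]; assumption)]
      · have hi' : i - F (m+1) < F m := by
          have : F (m+2) = F (m+1) + F m := rfl
          omega
        rw [ih m k (i - F (m+1)) j (by omega) hi' hj]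
        rw [show fibWord (m+2) = fibWord (m+1) ++ fibWord m from rfl,
          List.getD_append_right _ _ _ _ (by rw [fibWord_length]; omega)]
        rw [fibWord_length]

/-- each row i of f_{m,n}, read as a word of length F(n), is the image of
the 1D Fibonacci word f_n under the letter-to-letter substitution a ↦ c, b ↦ d if
f_m[i] = b, and under a ↦ a, b ↦ b if f_m[i] = a.  Moreover any two rows i, i' of f_{m,n}
with f_m[i] = f_m[i'] are identical. -/
theorem stmt19 (m n i : ℕ) (hi : i < F m) :
    (List.ofFn (fun j : Fin (F n) => fibArr m n i j.val)
      = (fibWord n).map (if (fibWord m).getD i 0 = 1 then substB else substA)) ∧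
    (∀ i' < F m, (fibWord m).getD i 0 = (fibWord m).getD i' 0 →
      ∀ j < F n, fibArr m n i j = fibArr m n i' j) := by
  have key : ∀ x y : Fin 2, (x, y) = (if x = 1 then substB else substA) y := by decide
  constructor
  · apply List.ext_getElem
    · simp [fibWord_length]
    · intro j h1 h2
      simp only [List.length_map, fibWord_length] at h2
      simp only [List.getElem_ofFn, List.getElem_map]
      rw [fibArr_eq (m + n) m n i j le_rfl hi h2,
        show (fibWord n)[j]'(by rw [fibWord_length]; exact h2) = (fibWord n).getD j 0 from
          (List.getD_eq_getElem _ _ _).symm]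
      exact key _ _
  · intro i' hi' heq j hj
    rw [fibArr_eq (m + n) m n i j le_rfl hi hj,
      fibArr_eq (m + n) m n i' j le_rfl hi' hj, heq]
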